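/- For a countable set A, there is a one-to-one correspondence between finite-or-countable multisets over A (functions A → ℕ∞ with countable support) and equivalence classes of finite or infinite words over the alphabet A under the relation w₁ ≃ w₂ iff for every finite word u, u ⊑ w₁ ⇔ u ⊑ w₂, where u ⊑ w means some finite prefix of w is, up to permutation of letters, an extension of u. -/

import Mathlib

set_option linter.unusedSectionVars false


/-- Finite or infinite words over an alphabet `A`. -/
def Word (A : Type) := List A ⊕ (ℕ → A)

/-- The finite prefixes of a finite or infinite word. -/
def prefixes {A : Type} : Word A → Set (List A)
  | .inl l => {v | v <+: l}
  | .inr f => {v | ∃ n : ℕ, v = (List.range n).map f}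

/-- `u ⊑ w`: some finite prefix `v` of `w` extends `u` up to permutation of letters,
i.e. the multiset of letters of `u` is contained in the multiset of letters of a
finite prefix of `w`. -/
def wordLe {A : Type} (u : List A) (w : Word A) : Prop :=
  ∃ v ∈ prefixes w, (↑u : Multiset A) ≤ ↑v

/-- The equivalence `w₁ ≃ w₂ ⟺ ∀ u, u ⊑ w₁ ↔ u ⊑ w₂`. -/
def wordEquiv {A : Type} (w₁ w₂ : Word A) : Prop :=
  ∀ u : List A, wordLe u w₁ ↔ wordLe u w₂

section basics
variable {A : Type} [DecidableEq A]

noncomputable def wcount (w : Word A) (a : A) : ℕ∞ :=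
  ⨆ v ∈ prefixes w, (Multiset.count a ↑v : ℕ∞)

lemma nil_mem_prefixes (w : Word A) : [] ∈ prefixes w := by
  cases w with
  | inl l => exact List.nil_prefix
  | inr f => exact ⟨0, rfl⟩

lemma range_map_prefix (f : ℕ → A) {n k : ℕ} (h : n ≤ k) :
    (List.range n).map f <+: (List.range k).map f := by
  have : List.range n <+: List.range k := by
    have := List.take_prefix n (List.range k)
    rwa [List.take_range, Nat.min_eq_left h] at this
  exact this.map f

lemma prefixes_chain {w : Word A} {v₁ v₂ : List A} (h₁ : v₁ ∈ prefixes w)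
    (h₂ : v₂ ∈ prefixes w) : v₁ <+: v₂ ∨ v₂ <+: v₁ := by
  cases w with
  | inl l => exact List.prefix_or_prefix_of_prefix h₁ h₂
  | inr f =>
    obtain ⟨n, rfl⟩ := h₁
    obtain ⟨k, rfl⟩ := h₂
    rcases le_total n k with h | h
    · exact Or.inl (range_map_prefix f h)
    · exact Or.inr (range_map_prefix f h)

lemma count_mono_prefix {v₁ v₂ : List A} (h : v₁ <+: v₂) (a : A) :
    Multiset.count a (↑v₁ : Multiset A) ≤ Multiset.count a ↑v₂ :=
  Multiset.le_iff_count.1 h.sublist.subperm a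

lemma count_le_wcount {w : Word A} {v : List A} (hv : v ∈ prefixes w) (a : A) :
    (Multiset.count a ↑v : ℕ∞) ≤ wcount w a :=
  le_iSup₂ (f := fun v (_ : v ∈ prefixes w) => (Multiset.count a ↑v : ℕ∞)) v hv

lemma wcount_inl (l : List A) (a : A) : wcount (Sum.inl l) a = Multiset.count a ↑l := by
  refine le_antisymm (iSup₂_le fun v hv => ?_)
    (count_le_wcount (w := Sum.inl l) (List.prefix_refl l) a)
  exact_mod_cast count_mono_prefix hv a

lemma wcount_inr (f : ℕ → A) (a : A) :
    wcount (Sum.inr f) a = ⨆ n : ℕ, (Multiset.count a ↑((List.range n).map f) : ℕ∞) := by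
  have : prefixes (Sum.inr f : Word A) = Set.range (fun n => (List.range n).map f) := by
    ext v; exact ⟨fun ⟨n, h⟩ => ⟨n, h.symm⟩, fun ⟨n, h⟩ => ⟨n, h.symm⟩⟩
  unfold wcount
  rw [this, iSup_range]

end basics
section two
variable {A : Type} [DecidableEq A]

-- ENat helpers
lemma enat_le_of_forall (x y : ℕ∞) (h : ∀ n : ℕ, (n : ℕ∞) ≤ x → (n : ℕ∞) ≤ y) : x ≤ y := by
  cases x with
  | top =>
    cases y with
    | top => exact le_rfl
    | coe k =>
      have := h (k + 1) le_top
      have h2 : (k + 1 : ℕ) ≤ k := by exact_mod_cast this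
      omega
  | coe n => exact h n le_rfl

-- extract a witness prefix for a single bound
lemma exists_prefix_count {w : Word A} {a : A} {c : ℕ}
    (h : (c : ℕ∞) ≤ ⨆ v ∈ prefixes w, (Multiset.count a ↑v : ℕ∞)) :
    ∃ v ∈ prefixes w, c ≤ Multiset.count a ↑v := by
  rcases Nat.eq_zero_or_pos c with rfl | hc
  · exact ⟨[], nil_mem_prefixes w, Nat.zero_le _⟩
  · by_contra hcon
    push_neg at hcon
    have : (⨆ v ∈ prefixes w, (Multiset.count a ↑v : ℕ∞)) ≤ ((c - 1 : ℕ) : ℕ∞) := by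
      refine iSup₂_le fun v hv => ?_
      have := hcon v hv
      exact_mod_cast Nat.le_sub_one_of_lt this
    have hle : (c : ℕ∞) ≤ ((c - 1 : ℕ) : ℕ∞) := le_trans h this
    have : c ≤ c - 1 := by exact_mod_cast hle
    omega

lemma exists_common_prefix {w : Word A} (s : Finset A) (c : A → ℕ)
    (h : ∀ a ∈ s, ∃ v ∈ prefixes w, c a ≤ Multiset.count a ↑v) :
    ∃ v ∈ prefixes w, ∀ a ∈ s, c a ≤ Multiset.count a ↑v := by
  classical
  induction s using Finset.induction_on with
  | empty => exact ⟨[], nil_mem_prefixes w, by simp⟩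
  | insert b s ha ih =>
    obtain ⟨v₁, hv₁, hv₁'⟩ := ih (fun a has => h a (Finset.mem_insert_of_mem has))
    obtain ⟨v₂, hv₂, hv₂'⟩ := h b (Finset.mem_insert_self b s)
    rcases prefixes_chain hv₁ hv₂ with hp | hp
    · refine ⟨v₂, hv₂, fun a hma => ?_⟩
      rcases Finset.mem_insert.1 hma with rfl | hma
      · exact hv₂'
      · exact le_trans (hv₁' a hma) (count_mono_prefix hp a)
    · refine ⟨v₁, hv₁, fun a hma => ?_⟩
      rcases Finset.mem_insert.1 hma with rfl | hma
      · exact le_trans hv₂' (count_mono_prefix hp a)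
      · exact hv₁' a hma

lemma wordLe_iff (u : List A) (w : Word A) :
    wordLe u w ↔ ∀ a : A, (Multiset.count a ↑u : ℕ∞) ≤ wcount w a := by
  constructor
  · rintro ⟨v, hv, huv⟩ a
    exact le_trans (by exact_mod_cast Multiset.le_iff_count.1 huv a) (count_le_wcount hv a)
  · intro h
    obtain ⟨v, hv, hv'⟩ := exists_common_prefix (w := w) u.toFinset
      (fun a => Multiset.count a ↑u) (fun a _ => exists_prefix_count (h a))
    refine ⟨v, hv, Multiset.le_iff_count.2 fun a => ?_⟩
    by_cases hau : a ∈ u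
    · exact hv' a (List.mem_toFinset.2 hau)
    · simp [Multiset.count_eq_zero_of_notMem, hau]

lemma wordEquiv_iff (w₁ w₂ : Word A) :
    wordEquiv w₁ w₂ ↔ ∀ a, wcount w₁ a = wcount w₂ a := by
  constructor
  · intro h a
    have key : ∀ (w : Word A) (n : ℕ), wordLe (List.replicate n a) w ↔ (n : ℕ∞) ≤ wcount w a := by
      intro w n
      rw [wordLe_iff]
      constructor
      · intro h'
        have := h' a
        simpa [Multiset.coe_count (l := List.replicate n a)] using this
      · intro h' b
        by_cases hba : b = a
        · subst hba; simpa using h'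
        · simp [List.count_replicate, hba]
    refine le_antisymm (enat_le_of_forall _ _ fun n hn => ?_)
      (enat_le_of_forall _ _ fun n hn => ?_)
    · exact (key w₂ n).1 ((h _).1 ((key w₁ n).2 hn))
    · exact (key w₁ n).1 ((h _).2 ((key w₂ n).2 hn))
  · intro h u
    rw [wordLe_iff, wordLe_iff]
    exact ⟨fun h' a => (h a) ▸ h' a, fun h' a => (h a).symm ▸ h' a⟩

end two
section realize
variable {A : Type} [DecidableEq A] [Countable A]

lemma realize (m : A → ℕ∞) : ∃ w : Word A, ∀ a, wcount w a = m a := by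
  classical
  set S : Set (A × ℕ) := {p : A × ℕ | (p.2 : ℕ∞) < m p.1} with hSdef
  rcases Set.finite_or_infinite S with hS | hS
  · -- finite case
    refine ⟨Sum.inl (hS.toFinset.toList.map Prod.fst), fun a => ?_⟩
    rw [wcount_inl]
    have hcount : Multiset.count a ↑(hS.toFinset.toList.map Prod.fst)
        = (hS.toFinset.filter (fun p => a = p.1)).card := by
      rw [← Multiset.map_coe, Finset.coe_toList, Multiset.count_map]
      rfl
    have hma : m a ≠ ⊤ := by
      intro htop
      refine (Set.infinite_of_injective_forall_mem
        (f := fun i : ℕ => ((a, i) : A × ℕ)) ?_ ?_) hS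
      · intro i₁ i₂ h; simpa using h
      · intro i; simp [hSdef, htop]
    obtain ⟨j, hj⟩ : ∃ j : ℕ, m a = (j : ℕ∞) := by
      cases hma' : m a with
      | top => exact absurd hma' hma
      | coe j => exact ⟨j, rfl⟩
    rw [hcount, hj]
    have : (hS.toFinset.filter (fun p => a = p.1)).card = j := by
      rw [← Finset.card_range j]
      refine Finset.card_nbij' (fun p => p.2) (fun i => (a, i)) ?_ ?_ ?_ ?_
      · intro p hp
        rw [Finset.mem_coe, Finset.mem_filter, hS.mem_toFinset] at hp
        obtain ⟨hpS, hpa⟩ := hp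
        rw [Finset.mem_coe, Finset.mem_range]
        have hlt : ((p.2 : ℕ) : ℕ∞) < m p.1 := hpS
        rw [← hpa, hj] at hlt
        exact_mod_cast hlt
      · intro i hi
        rw [Finset.mem_coe, Finset.mem_range] at hi
        rw [Finset.mem_coe, Finset.mem_filter, hS.mem_toFinset]
        refine ⟨?_, rfl⟩
        show ((i : ℕ) : ℕ∞) < m a
        rw [hj]; exact_mod_cast hi
      · intro p hp
        rw [Finset.mem_coe, Finset.mem_filter, hS.mem_toFinset] at hp
        exact Prod.ext hp.2 rfl
      · intro i _; rfl
    exact_mod_cast this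
  · -- infinite case
    haveI := hS.to_subtype
    obtain ⟨d⟩ := nonempty_denumerable ↥S
    set e : ℕ ≃ ↥S := (Denumerable.eqv ↥S).symm with hedef
    set fI : ℕ → A := fun k => ((e k : A × ℕ)).1 with hfIdef
    refine ⟨Sum.inr fI, fun a => ?_⟩
    rw [wcount_inr]
    have hcount : ∀ n : ℕ, Multiset.count a ↑((List.range n).map fI)
        = ((Finset.range n).filter (fun k => a = fI k)).card := by
      intro n
      rw [← Multiset.map_coe, Multiset.count_map]
      rfl
    refine le_antisymm (iSup_le fun n => ?_) ?_
    · -- each prefix count ≤ m a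
      rw [hcount]
      cases hma : m a with
      | top => exact le_top
      | coe j =>
        have hcard : ((Finset.range n).filter (fun k => a = fI k)).card ≤ j := by
          rw [← Finset.card_range j]
          refine Finset.card_le_card_of_injOn (fun k => ((e k : A × ℕ)).2)
            ?_ ?_
          · intro k hk
            rw [Finset.mem_coe, Finset.mem_filter] at hk
            have hkS : ((e k : A × ℕ)) ∈ S := (e k).2
            have h1 : (((e k : A × ℕ)).2 : ℕ∞) < m (((e k : A × ℕ)).1) := hkS
            have h2 : (((e k : A × ℕ)).2 : ℕ∞) < m a := by rw [hk.2]; exact h1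
            rw [hma] at h2
            rw [Finset.mem_coe, Finset.mem_range]
            exact_mod_cast h2
          · intro k₁ hk₁ k₂ hk₂ hkk
            rw [Finset.coe_filter, Set.mem_setOf_eq] at hk₁ hk₂
            have h1 : ((e k₁ : A × ℕ)) = ((e k₂ : A × ℕ)) :=
              Prod.ext (hk₁.2.symm.trans hk₂.2) hkk
            exact e.injective (Subtype.ext h1)
        exact_mod_cast hcard
    · -- m a ≤ sup
      refine enat_le_of_forall _ _ fun j hj => ?_
      set K : ℕ → ℕ := fun i => if h : ((i : ℕ∞) < m a) then (e.symm ⟨(a, i), h⟩ : ℕ) else 0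
        with hKdef
      set n : ℕ := (Finset.range j).sup K + 1 with hndef
      have hcard : j ≤ ((Finset.range n).filter (fun k => a = fI k)).card := by
        have : ((Finset.range j).card ≤ ((Finset.range n).filter (fun k => a = fI k)).card) := by
          refine Finset.card_le_card_of_injOn K ?_ ?_
          · intro i hi
            rw [Finset.mem_coe, Finset.mem_range] at hi
            have hiS : ((i : ℕ∞) < m a) := lt_of_lt_of_le (by exact_mod_cast hi) hj
            rw [Finset.mem_coe, Finset.mem_filter, Finset.mem_range]
            constructor
            · have : K i ≤ (Finset.range j).sup K :=
                Finset.le_sup (Finset.mem_range.2 hi)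
              omega
            · rw [hKdef]
              simp only [dif_pos hiS]
              show a = fI (e.symm ⟨(a, i), hiS⟩ : ℕ)
              rw [hfIdef]
              simp
          · intro i₁ hi₁ i₂ hi₂ hK
            rw [Finset.mem_coe, Finset.mem_range] at hi₁ hi₂
            have h₁ : ((i₁ : ℕ∞) < m a) := lt_of_lt_of_le (by exact_mod_cast hi₁) hj
            have h₂ : ((i₂ : ℕ∞) < m a) := lt_of_lt_of_le (by exact_mod_cast hi₂) hj
            rw [hKdef] at hK
            simp only [dif_pos h₁, dif_pos h₂] at hK
            have h3 := e.symm.injective hK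
            have h4 : ((a, i₁) : A × ℕ) = (a, i₂) := congrArg Subtype.val h3
            exact (Prod.ext_iff.1 h4).2
        simpa using this
      calc (j : ℕ∞) ≤ (((Finset.range n).filter (fun k => a = fI k)).card : ℕ∞) := by
            exact_mod_cast hcard
        _ = Multiset.count a ↑((List.range n).map fI) := by rw [hcount]
        _ ≤ ⨆ n : ℕ, (Multiset.count a ↑((List.range n).map fI) : ℕ∞) :=
            le_iSup (fun n => (Multiset.count a ↑((List.range n).map fI) : ℕ∞)) n
end realize

/-- for a countable set `A`, there is a one-to-one correspondence
between finite-or-countable multisets over `A` (functions `A → ℕ∞` with countable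
support) and equivalence classes of finite or infinite words over `A` under `≃`. -/
theorem multiset_word_correspondence (A : Type) [Countable A] :
    Nonempty ({m : A → ℕ∞ // Set.Countable {a | m a ≠ 0}} ≃ Quot (@wordEquiv A)) := by
  classical
  have e1 : {m : A → ℕ∞ // Set.Countable {a | m a ≠ 0}} ≃ (A → ℕ∞) :=
    Equiv.subtypeUnivEquiv (fun m => Set.to_countable _)
  let g : Quot (@wordEquiv A) → (A → ℕ∞) :=
    Quot.lift wcount (fun w₁ w₂ h => funext fun a => (wordEquiv_iff w₁ w₂).1 h a)
  have hg : Function.Bijective g := by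
    constructor
    · intro q₁ q₂
      induction q₁ using Quot.ind with | _ w₁ =>
      induction q₂ using Quot.ind with | _ w₂ =>
      intro h
      exact Quot.sound ((wordEquiv_iff w₁ w₂).2 (fun a => congrFun h a))
    · intro m
      obtain ⟨w, hw⟩ := realize m
      exact ⟨Quot.mk _ w, funext hw⟩
  exact ⟨e1.trans (Equiv.ofBijective g hg).symm⟩
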